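/- arXiv:math/0504474 — 2 statements merged into one kernel-verified Lean document; each statement's English description precedes it below -/
import Mathlib

section
/- Let Ω ⊆ ℂ be a nonempty connected open set and f₁, …, f_k : Ω → ℂ holomorphic functions such that for every natural number n ≥ 1 the power-sum function S_n(z) = Σᵢ fᵢ(z)ⁿ is constant on Ω. Then each fᵢ is constant on Ω. -/
open Finset

theorem power_sums_constant_implies_constant
    (Ω : Set ℂ) (hΩo : IsOpen Ω) (hΩc : IsConnected Ω)
    (k : ℕ) (f : Fin k → ℂ → ℂ)
    (hf : ∀ i, DifferentiableOn ℂ (f i) Ω)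
    (hS : ∀ n : ℕ, 1 ≤ n → ∃ c : ℂ, ∀ z ∈ Ω, ∑ i : Fin k, (f i z) ^ n = c) :
    ∀ i : Fin k, ∃ c : ℂ, ∀ z ∈ Ω, f i z = c := by
  classical
  obtain ⟨z0, hz0⟩ := hΩc.nonempty
  -- power sums agree at z and z0
  have hpsum : ∀ n, 1 ≤ n → ∀ z ∈ Ω,
      ∑ i : Fin k, f i z ^ n = ∑ i : Fin k, f i z0 ^ n := by
    intro n hn z hz
    obtain ⟨c, hc⟩ := hS n hn
    rw [hc z hz, hc z0 hz0]
  -- evaluation of psum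
  have heval_psum : ∀ (g : Fin k → ℂ) (n : ℕ),
      MvPolynomial.aeval g (MvPolynomial.psum (Fin k) ℂ n) = ∑ i : Fin k, g i ^ n := by
    intro g n
    simp [MvPolynomial.psum]
  -- elementary symmetric values agree at z and z0 (Newton's identities + strong induction)
  have hesymm : ∀ m : ℕ, ∀ z ∈ Ω,
      MvPolynomial.aeval (fun i => f i z) (MvPolynomial.esymm (Fin k) ℂ m)
        = MvPolynomial.aeval (fun i => f i z0) (MvPolynomial.esymm (Fin k) ℂ m) := by
    intro m
    induction m using Nat.strong_induction_on with
    | _ m ih =>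
      intro z hz
      rcases Nat.eq_zero_or_pos m with rfl | hm
      · simp [MvPolynomial.esymm]
      · have key := MvPolynomial.mul_esymm_eq_sum (Fin k) ℂ m
        have h1 := congrArg (MvPolynomial.aeval (R := ℂ) (fun i => f i z)) key
        have h2 := congrArg (MvPolynomial.aeval (R := ℂ) (fun i => f i z0)) key
        simp only [map_mul, map_pow, map_sum, map_neg, map_one, map_natCast] at h1 h2
        have hsum_eq :
            ∑ a ∈ antidiagonal m with a.1 < m,
              (-1 : ℂ) ^ a.1
                * MvPolynomial.aeval (fun i => f i z) (MvPolynomial.esymm (Fin k) ℂ a.1)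
                * MvPolynomial.aeval (fun i => f i z) (MvPolynomial.psum (Fin k) ℂ a.2)
            = ∑ a ∈ antidiagonal m with a.1 < m,
              (-1 : ℂ) ^ a.1
                * MvPolynomial.aeval (fun i => f i z0) (MvPolynomial.esymm (Fin k) ℂ a.1)
                * MvPolynomial.aeval (fun i => f i z0) (MvPolynomial.psum (Fin k) ℂ a.2) := by
          refine Finset.sum_congr rfl ?_
          intro a ha
          simp only [Finset.mem_filter, Finset.HasAntidiagonal.mem_antidiagonal] at ha
          obtain ⟨hadd, hlt⟩ := ha
          have ha2 : 1 ≤ a.2 := by omega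
          rw [ih a.1 hlt z hz, heval_psum, heval_psum, hpsum a.2 ha2 z hz]
        have hmain : (m : ℂ)
              * MvPolynomial.aeval (fun i => f i z) (MvPolynomial.esymm (Fin k) ℂ m)
            = (m : ℂ)
              * MvPolynomial.aeval (fun i => f i z0) (MvPolynomial.esymm (Fin k) ℂ m) := by
          rw [h1, h2, hsum_eq]
        have hmne : (m : ℂ) ≠ 0 := Nat.cast_ne_zero.mpr hm.ne'
        exact mul_left_cancel₀ hmne hmain
  -- multiset esymm values agree
  have hesymm' : ∀ m : ℕ, ∀ z ∈ Ω,
      ((univ.val.map fun i => f i z).esymm m : ℂ)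
        = (univ.val.map fun i => f i z0).esymm m := by
    intro m z hz
    have h1 := MvPolynomial.aeval_esymm_eq_multiset_esymm (Fin k) ℂ m (fun i => f i z)
    have h2 := MvPolynomial.aeval_esymm_eq_multiset_esymm (Fin k) ℂ m (fun i => f i z0)
    rw [← h1, ← h2, hesymm m z hz]
  -- the characteristic polynomials agree
  have hpoly : ∀ z ∈ Ω,
      ((univ.val.map fun i => f i z).map fun t => Polynomial.X - Polynomial.C t).prod
        = ((univ.val.map fun i => f i z0).map fun t => Polynomial.X - Polynomial.C t).prod := by
    intro z hz
    rw [Multiset.prod_X_sub_X_eq_sum_esymm, Multiset.prod_X_sub_X_eq_sum_esymm]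
    simp only [Multiset.card_map, Finset.card_val, Finset.card_univ, Fintype.card_fin]
    refine Finset.sum_congr rfl ?_
    intro j _
    rw [hesymm' j z hz]
  -- hence every value f i z is one of the f j z0
  have hmaps : ∀ i : Fin k, Set.MapsTo (f i) Ω (Set.range fun j => f j z0) := by
    intro i z hz
    have hroot : Polynomial.eval (f i z)
        (((univ.val.map fun i => f i z).map fun t => Polynomial.X - Polynomial.C t).prod)
          = 0 := by
      rw [Multiset.map_map]
      have : (univ.val.map ((fun t => Polynomial.X - Polynomial.C t) ∘ fun j => f j z)).prod
          = ∏ j : Fin k, (Polynomial.X - Polynomial.C (f j z)) := rfl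
      rw [this, Polynomial.eval_prod]
      exact Finset.prod_eq_zero (Finset.mem_univ i) (by simp)
    rw [hpoly z hz] at hroot
    rw [Multiset.map_map] at hroot
    have : (univ.val.map ((fun t => Polynomial.X - Polynomial.C t) ∘ fun j => f j z0)).prod
        = ∏ j : Fin k, (Polynomial.X - Polynomial.C (f j z0)) := rfl
    rw [this, Polynomial.eval_prod] at hroot
    obtain ⟨j, _, hj⟩ := Finset.prod_eq_zero_iff.mp hroot
    simp only [Polynomial.eval_sub, Polynomial.eval_X, Polynomial.eval_C, sub_eq_zero] at hj
    exact ⟨j, hj.symm⟩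
  -- connectedness + continuity into a finite set: constant
  intro i
  refine ⟨f i z0, fun z hz => ?_⟩
  haveI : Finite ↥(Set.range fun j => f j z0) := (Set.finite_range _).to_subtype
  exact hΩc.isPreconnected.constant_of_mapsTo (isDiscrete_iff_discreteTopology.mpr inferInstance)
    ((hf i).continuousOn) (hmaps i) hz hz0
end

section
/- Let Ω ⊆ ℂ be a connected open set, z₀ ∈ Ω, and f₁, …, f_k : Ω → ℂ holomorphic with f₁(z₀) = 1 and |f_j(z₀)| < 1 for all j ≥ 2. If for every n ≥ 1 the function z ↦ Σᵢ fᵢ(z)ⁿ has vanishing derivative at z₀, then f₁'(z₀) = 0. -/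
open Finset

theorem dominant_derivative_vanishes
    (Ω : Set ℂ) (hΩo : IsOpen Ω) (hΩc : IsConnected Ω)
    (z₀ : ℂ) (hz₀ : z₀ ∈ Ω)
    (k : ℕ) (f : Fin (k + 1) → ℂ → ℂ)
    (hf : ∀ i, DifferentiableOn ℂ (f i) Ω)
    (hnorm : f 0 z₀ = 1)
    (hdom : ∀ j : Fin (k + 1), j ≠ 0 → ‖f j z₀‖ < 1)
    (hderiv : ∀ n : ℕ, 1 ≤ n →
      deriv (fun z => ∑ i : Fin (k + 1), (f i z) ^ n) z₀ = 0) :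
    deriv (f 0) z₀ = 0 := by
  have hdiff : ∀ i, DifferentiableAt ℂ (f i) z₀ := fun i =>
    (hf i).differentiableAt (hΩo.mem_nhds hz₀)
  set d : Fin (k + 1) → ℂ := fun i => deriv (f i) z₀ with hd
  have key : ∀ m : ℕ, ∑ i : Fin (k + 1), (f i z₀) ^ m * d i = 0 := by
    intro m
    have hD : HasDerivAt (fun z => ∑ i : Fin (k + 1), (f i z) ^ (m + 1))
        (∑ i : Fin (k + 1), ((m + 1 : ℕ) * (f i z₀) ^ m * d i)) z₀ := by
      apply HasDerivAt.fun_sum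
      intro i _
      simpa using ((hdiff i).hasDerivAt).fun_pow (m + 1)
    have h0 := hderiv (m + 1) (by omega)
    rw [hD.deriv] at h0
    have h1 : ((m + 1 : ℕ) : ℂ) * ∑ i : Fin (k + 1), (f i z₀) ^ m * d i = 0 := by
      rw [mul_sum]
      rw [← h0]
      apply Finset.sum_congr rfl
      intro i _
      ring
    have hne : ((m + 1 : ℕ) : ℂ) ≠ 0 := by exact_mod_cast Nat.succ_ne_zero m
    exact (mul_eq_zero.mp h1).resolve_left hne
  have key2 : ∀ m : ℕ, d 0 = -∑ j : Fin k, (f j.succ z₀) ^ m * d j.succ := by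
    intro m
    have := key m
    rw [Fin.sum_univ_succ, hnorm, one_pow, one_mul] at this
    exact eq_neg_of_add_eq_zero_left this
  have hlim : Filter.Tendsto (fun m : ℕ => -∑ j : Fin k, (f j.succ z₀) ^ m * d j.succ)
      Filter.atTop (nhds 0) := by
    rw [show (0 : ℂ) = -∑ j : Fin k, (0 : ℂ) by simp]
    apply Filter.Tendsto.neg
    apply tendsto_finset_sum
    intro j _
    rw [show (0 : ℂ) = 0 * d j.succ by simp]
    exact (tendsto_pow_atTop_nhds_zero_of_norm_lt_one
      (by simpa using hdom j.succ (Fin.succ_ne_zero j))).mul_const _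
  have hconst : Filter.Tendsto (fun _ : ℕ => d 0) Filter.atTop (nhds (d 0)) :=
    tendsto_const_nhds
  have : d 0 = 0 := by
    apply tendsto_nhds_unique hconst
    simpa only [← key2] using hlim
  exact this
end
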